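/- For every integer l ≥ 0, ∫₀^π P_{2l+1}(cos θ) · cos θ dθ = π · Σ_{m=0}^{l} (−1)^m · (4l+2−2m)! / ( 2^{2(2l+1−m)} · m! · (2l+1−m)! · (l−m)! · (l+1−m)! ), where P_{2l+1} is the Legendre polynomial of degree 2l+1; in particular this integral is a nonzero rational multiple of π. -/

import Mathlib

open Real

noncomputable section

/-- The `n`-th Legendre polynomial, via Rodrigues' formula
`P_n(x) = 1/(2ⁿ n!) dⁿ/dxⁿ [(x² − 1)ⁿ]`. -/
def legendreP (n : ℕ) (x : ℝ) : ℝ :=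
  (1 / ((2 : ℝ) ^ n * (n.factorial : ℝ))) * iteratedDeriv n (fun t : ℝ => (t ^ 2 - 1) ^ n) x

open Polynomial Finset


-- cast helper
lemma fs (k : ℕ) : ((k+1).factorial : ℝ) = (k+1) * k.factorial := by
  rw [Nat.factorial_succ]; push_cast; ring

-- Wallis
lemma cos_pow_int (k : ℕ) :
    (∫ θ in (0:ℝ)..π, Real.cos θ ^ (2*k)) =
      π * ((2*k).factorial : ℝ) / (4^k * ((k.factorial : ℝ))^2) := by
  induction k with
  | zero => simp
  | succ k ih =>
    have h := integral_cos_pow (a := 0) (b := π) (2*k)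
    rw [show 2*(k+1) = 2*k+2 by ring, h, ih]
    rw [Real.sin_pi, Real.sin_zero]
    have h1 : ((2*k+2).factorial : ℝ) = (2*k+2)*(2*k+1)*((2*k).factorial) := by
      rw [show 2*k+2 = (2*k+1)+1 by ring, fs, fs]; push_cast; ring
    rw [h1, fs]
    have h2 : ((2*k).factorial : ℝ) > 0 := by positivity
    have h3 : ((k.factorial : ℝ)) > 0 := by positivity
    field_simp
    push_cast
    ring

-- iteratedDeriv of polynomial eval
lemma iterDeriv_eval (n : ℕ) (p : ℝ[X]) :
    iteratedDeriv n (fun x => p.eval x) = fun x => (Polynomial.derivative^[n] p).eval x := by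
  induction n generalizing p with
  | zero => simp
  | succ n ih =>
    rw [iteratedDeriv_succ', show deriv (fun x => p.eval x) = fun x => p.derivative.eval x
      from funext fun x => Polynomial.deriv p, ih, Function.iterate_succ_apply]

-- polynomial expansion of derivative^[n] ((X^2-1)^n), n = 2l+1
lemma poly_expand (l : ℕ) :
    (Polynomial.derivative^[2*l+1] ((X^2 - 1 : ℝ[X])^(2*l+1))) =
      ∑ m ∈ range (l+1),
        Polynomial.C ((-1:ℝ)^m * ((2*l+1).choose m) * ((4*l+2-2*m).descFactorial (2*l+1))) *
          X ^ (2*l+1-2*m) := by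
  have step1 : ((X^2 - 1 : ℝ[X])^(2*l+1)) =
      ∑ m ∈ range (2*l+1+1), Polynomial.C ((-1:ℝ)^(m+(2*l+1)) * ((2*l+1).choose m)) * X^(2*m) := by
    rw [sub_pow]
    refine sum_congr rfl fun m hm => ?_
    rw [map_mul, map_pow, map_neg, map_one, ← pow_mul, C_eq_natCast]
    ring
  rw [step1, Polynomial.iterate_derivative_sum]
  have step2 : ∀ m ∈ range (2*l+1+1),
      Polynomial.derivative^[2*l+1] (Polynomial.C ((-1:ℝ)^(m+(2*l+1)) * ((2*l+1).choose m)) * X^(2*m))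
        = Polynomial.C ((-1:ℝ)^(m+(2*l+1)) * ((2*l+1).choose m) * ((2*m).descFactorial (2*l+1))) *
            X ^ (2*m-(2*l+1)) := by
    intro m _
    rw [Polynomial.iterate_derivative_C_mul, Polynomial.iterate_derivative_X_pow_eq_natCast_mul,
      ← C_eq_natCast, ← mul_assoc, ← C_mul]
  rw [sum_congr rfl step2, show 2*l+1+1 = (l+1)+(l+1) by ring, Finset.sum_range_add]
  have zfirst : ∀ m ∈ range (l+1),
      Polynomial.C ((-1:ℝ)^(m+(2*l+1)) * ((2*l+1).choose m) * ((2*m).descFactorial (2*l+1))) *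
        X ^ (2*m-(2*l+1)) = 0 := by
    intro m hm
    rw [mem_range] at hm
    rw [Nat.descFactorial_eq_zero_iff_lt.2 (by omega)]
    simp
  rw [sum_congr rfl zfirst]
  simp only [sum_const_zero, zero_add]
  conv_rhs => rw [← Finset.sum_range_reflect]
  refine sum_congr rfl fun j hj => ?_
  rw [mem_range] at hj
  obtain ⟨k, rfl⟩ : ∃ k, l = j + k := ⟨l - j, by omega⟩
  simp only [show j+k+1-1-j = k by omega, show 2*(j+k)+1-2*k = 2*j+1 by omega,
    show 2*(j+k+1+j) - (2*(j+k)+1) = 2*j+1 by omega,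
    show 2*(j+k+1+j) = 4*(j+k)+2-2*k by omega,
    show j+k+1+j+(2*(j+k)+1) = k + 2*(2*j+k+1) by omega,
    show j+k+1+j = (2*(j+k)+1) - k by omega]
  rw [Nat.choose_symm (by omega)]
  simp only [show 2*(2*(j+k)+1-k) = 4*(j+k)+2-2*k by omega,
    show 4*(j+k)+2-2*k-(2*(j+k)+1) = 2*j+1 by omega]
  congr 2
  rw [show 2*(j+k)+1-k+(2*(j+k)+1) = k+2*(2*j+k+1) by omega, pow_add, pow_mul]
  norm_num
def TT (l m : ℕ) : ℝ :=
  (-4)^m * ((4*l+2-2*m).factorial) /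
    ((m.factorial) * ((2*l+1-m).factorial) * ((l-m).factorial) * ((l+1-m).factorial))

def GG (l m : ℕ) : ℝ := if m = 0 then 0 else
  (-4)^m * (4*l+6-2*m) * ((4*l+4-2*m).factorial) *
      ((m*(4*l+5) : ℝ) - (6*(l:ℝ)^2+16*l+11)) /
    (((m-1).factorial) * ((2*l+3-m).factorial) * ((l+1-m).factorial) * ((l+2-m).factorial) *
      (l+1) * (l+2))

lemma key1 (l m : ℕ) (h : m ≤ l) :
    TT (l+1) m - (4*(2*(l:ℝ)+1)*(2*l+3)/((l+1)*(l+2))) * TT l m = GG l (m+1) - GG l m := by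
  obtain ⟨a, rfl⟩ : ∃ a, l = m + a := ⟨l - m, by omega⟩
  cases m with
  | zero =>
    have fne : ∀ k : ℕ, (k.factorial : ℝ) ≠ 0 := fun k => Nat.cast_ne_zero.2 (Nat.factorial_ne_zero k)
    simp only [TT, GG, Nat.zero_add, Nat.add_zero, Nat.sub_zero, Nat.mul_zero, Nat.sub_self,
      if_neg (Nat.one_ne_zero), Nat.zero_le, zero_add, pow_zero, Nat.factorial_zero]
    simp only [if_true]
    simp only [show 4*(a+1)+2 = 4*a+6 by omega, show 2*(a+1)+1 = 2*a+3 by omega,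
      show 4*a+4-2*1 = 4*a+2 by omega, show 2*a+3-1 = 2*a+2 by omega,
      show a+1-1 = a by omega, show a+2-1 = a+1 by omega, show a+1+1 = a+2 by omega]
    have e1 : ((4*a+6).factorial : ℝ)
        = (4*a+6)*(4*a+5)*(4*a+4)*(4*a+3)*((4*a+2).factorial) := by
      rw [show 4*a+6 = (4*a+5)+1 by omega, fs, show 4*a+5 = (4*a+4)+1 by omega, fs,
        show 4*a+4 = (4*a+3)+1 by omega, fs, show 4*a+3 = (4*a+2)+1 by omega, fs]
      all_goals (push_cast; ring)
    have e2 : ((2*a+3).factorial : ℝ) = (2*a+3)*(2*a+2)*((2*a+1).factorial) := by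
      rw [show 2*a+3 = (2*a+2)+1 by omega, fs, show 2*a+2 = (2*a+1)+1 by omega, fs]
      all_goals (push_cast; ring)
    have e3 : ((2*a+2).factorial : ℝ) = (2*a+2)*((2*a+1).factorial) := by
      rw [show 2*a+2 = (2*a+1)+1 by omega, fs]
      all_goals (push_cast; ring)
    have e5 : ((a+1).factorial : ℝ) = (a+1)*(a.factorial) := by
      rw [fs]
      all_goals (push_cast; ring)
    have e6 : ((a+2).factorial : ℝ) = (a+2)*(a+1)*(a.factorial) := by
      rw [show a+2 = (a+1)+1 by omega, fs, fs]
      all_goals (push_cast; ring)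
    rw [e1, e2, e3, e5, e6]
    have h1 : ((4*a+2).factorial : ℝ) ≠ 0 := fne _
    have h2 : ((2*a+1).factorial : ℝ) ≠ 0 := fne _
    have h3 : (a.factorial : ℝ) ≠ 0 := fne _
    push_cast
    have h5 : ((a:ℝ)+1) ≠ 0 := by positivity
    have h6 : ((a:ℝ)+2) ≠ 0 := by positivity
    field_simp
    ring
  | succ c =>
    have fne : ∀ k : ℕ, (k.factorial : ℝ) ≠ 0 := fun k => Nat.cast_ne_zero.2 (Nat.factorial_ne_zero k)
    simp only [TT, GG, if_neg (Nat.succ_ne_zero c), if_neg (Nat.succ_ne_zero (c+1))]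
    simp only [show 4*(c+1+a+1)+2-2*(c+1) = 2*c+4*a+8 by omega,
      show 2*(c+1+a+1)+1-(c+1) = c+2*a+4 by omega,
      show c+1+a+1-(c+1) = a+1 by omega,
      show c+1+a+1+1-(c+1) = a+2 by omega,
      show 4*(c+1+a)+2-2*(c+1) = 2*c+4*a+4 by omega,
      show 2*(c+1+a)+1-(c+1) = c+2*a+2 by omega,
      show c+1+a-(c+1) = a by omega,
      show c+1+a+1-(c+1) = a+1 by omega,
      show 4*(c+1+a)+4-2*(c+1+1) = 2*c+4*a+4 by omega,
      show 4*(c+1+a)+4-2*(c+1) = 2*c+4*a+6 by omega,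
      show c+1+1-1 = c+1 by omega,
      show c+1-1 = c by omega,
      show 2*(c+1+a)+3-(c+1+1) = c+2*a+3 by omega,
      show 2*(c+1+a)+3-(c+1) = c+2*a+4 by omega,
      show c+1+a+1-(c+1+1) = a by omega,
      show c+1+a+2-(c+1+1) = a+1 by omega,
      show c+1+a+2-(c+1) = a+2 by omega]
    have e1 : ((2*c+4*a+8).factorial : ℝ)
        = (2*c+4*a+8)*(2*c+4*a+7)*(2*c+4*a+6)*(2*c+4*a+5)*((2*c+4*a+4).factorial) := by
      rw [show 2*c+4*a+8 = (2*c+4*a+7)+1 by omega, fs, show 2*c+4*a+7 = (2*c+4*a+6)+1 by omega, fs,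
        show 2*c+4*a+6 = (2*c+4*a+5)+1 by omega, fs, show 2*c+4*a+5 = (2*c+4*a+4)+1 by omega, fs]
      push_cast; ring
    have e2 : ((2*c+4*a+6).factorial : ℝ) = (2*c+4*a+6)*(2*c+4*a+5)*((2*c+4*a+4).factorial) := by
      rw [show 2*c+4*a+6 = (2*c+4*a+5)+1 by omega, fs, show 2*c+4*a+5 = (2*c+4*a+4)+1 by omega, fs]
      push_cast; ring
    have e3 : ((c+2*a+4).factorial : ℝ) = (c+2*a+4)*(c+2*a+3)*((c+2*a+2).factorial) := by
      rw [show c+2*a+4 = (c+2*a+3)+1 by omega, fs, show c+2*a+3 = (c+2*a+2)+1 by omega, fs]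
      push_cast; ring
    have e4 : ((c+2*a+3).factorial : ℝ) = (c+2*a+3)*((c+2*a+2).factorial) := by
      rw [show c+2*a+3 = (c+2*a+2)+1 by omega, fs]
      all_goals (push_cast; ring)
    have e5 : ((a+1).factorial : ℝ) = (a+1)*(a.factorial) := by
      rw [fs]
      all_goals (push_cast; ring)
    have e6 : ((a+2).factorial : ℝ) = (a+2)*(a+1)*(a.factorial) := by
      rw [show a+2 = (a+1)+1 by omega, fs, fs]
      all_goals (push_cast; ring)
    have e7 : ((c+1).factorial : ℝ) = (c+1)*(c.factorial) := by
      rw [fs]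
      all_goals (push_cast; ring)
    rw [e1, e2, e3, e4, e5, e6, e7]
    have h1 : ((2*c+4*a+4).factorial : ℝ) ≠ 0 := fne _
    have h2 : ((c+2*a+2).factorial : ℝ) ≠ 0 := fne _
    have h3 : (a.factorial : ℝ) ≠ 0 := fne _
    have h4 : (c.factorial : ℝ) ≠ 0 := fne _
    push_cast
    have h5 : ((c:ℝ)+1+a+1) ≠ 0 := by positivity
    have h6 : ((c:ℝ)+1+a+2) ≠ 0 := by positivity
    field_simp
    ring

lemma key2 (l : ℕ) : TT (l+1) (l+1) = - GG l (l+1) := by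
  have fne : ∀ k : ℕ, (k.factorial : ℝ) ≠ 0 := fun k => Nat.cast_ne_zero.2 (Nat.factorial_ne_zero k)
  simp only [TT, GG, if_neg (Nat.succ_ne_zero l)]
  simp only [show 4*(l+1)+2-2*(l+1) = 2*l+4 by omega, show 2*(l+1)+1-(l+1) = l+2 by omega,
    show l+1-(l+1) = 0 by omega, show l+1+1-(l+1) = 1 by omega,
    show 4*l+4-2*(l+1) = 2*l+2 by omega, show l+1-1 = l by omega,
    show 2*l+3-(l+1) = l+2 by omega, show l+2-(l+1) = 1 by omega,
    Nat.factorial_zero, Nat.factorial_one]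
  have e1 : ((2*l+4).factorial : ℝ) = (2*l+4)*(2*l+3)*((2*l+2).factorial) := by
    rw [show 2*l+4 = (2*l+3)+1 by omega, fs, show 2*l+3 = (2*l+2)+1 by omega, fs]
    all_goals (push_cast; ring)
  have e2 : ((l+2).factorial : ℝ) = (l+2)*(l+1)*(l.factorial) := by
    rw [show l+2 = (l+1)+1 by omega, fs, fs]
    all_goals (push_cast; ring)
  have e3 : ((l+1).factorial : ℝ) = (l+1)*(l.factorial) := by
    rw [fs]
    all_goals (push_cast; ring)
  rw [e1, e2, e3]
  have h1 : ((2*l+2).factorial : ℝ) ≠ 0 := fne _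
  have h2 : ((l.factorial : ℝ)) ≠ 0 := fne _
  push_cast
  have h3 : ((l:ℝ)+1) ≠ 0 := by positivity
  have h4 : ((l:ℝ)+2) ≠ 0 := by positivity
  field_simp
  ring

lemma GG_zero (l : ℕ) : GG l 0 = 0 := by simp [GG]

lemma sumTT (l : ℕ) :
    ∑ m ∈ range (l+1), TT l m = (Nat.centralBinom l : ℝ) * (Nat.centralBinom (l+1)) := by
  induction l with
  | zero =>
    simp [TT, Nat.centralBinom]
  | succ l ih =>
    have hstep : ∀ m ∈ range (l+1),
        TT (l+1) m = (4*(2*(l:ℝ)+1)*(2*l+3)/((l+1)*(l+2))) * TT l m + (GG l (m+1) - GG l m) := by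
      intro m hm
      rw [mem_range] at hm
      have := key1 l m (by omega)
      linarith [this]
    rw [Finset.sum_range_succ, sum_congr rfl hstep, Finset.sum_add_distrib, ← Finset.mul_sum,
      Finset.sum_range_sub (fun m => GG l m), ih, key2, GG_zero]
    have h1 : ((l:ℝ)+1) * (Nat.centralBinom (l+1)) = 2*(2*l+1) * (Nat.centralBinom l) := by
      exact_mod_cast congrArg (Nat.cast : ℕ → ℝ) (Nat.succ_mul_centralBinom_succ l)
    have h2 : ((l:ℝ)+2) * (Nat.centralBinom (l+2)) = 2*(2*(l+1)+1) * (Nat.centralBinom (l+1)) := by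
      exact_mod_cast congrArg (Nat.cast : ℕ → ℝ) (Nat.succ_mul_centralBinom_succ (l+1))
    have h3 : ((l:ℝ)+1) ≠ 0 := by positivity
    have h4 : ((l:ℝ)+2) ≠ 0 := by positivity
    simp only [show l+1+1 = l+2 from rfl]
    rw [mul_comm (4 * (2 * (l:ℝ) + 1) * (2 * (l:ℝ) + 3) / (((l:ℝ) + 1) * ((l:ℝ) + 2))), sub_zero, add_neg_cancel_right, ← mul_div_assoc, div_eq_iff (by positivity : ((l:ℝ)+1)*((l:ℝ)+2) ≠ 0)]
    linear_combination (-(2*(2*(l:ℝ)+3)*((Nat.centralBinom (l+1)):ℝ))) * h1 +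
      (-(((l:ℝ)+1)*((Nat.centralBinom (l+1)):ℝ))) * h2

lemma legendre_sum (l : ℕ) (θ : ℝ) :
    legendreP (2*l+1) (Real.cos θ) * Real.cos θ =
      ∑ m ∈ range (l+1),
        (1/((2:ℝ)^(2*l+1) * (((2*l+1).factorial : ℝ))) * ((-1:ℝ)^m * (((2*l+1).choose m : ℕ) : ℝ) *
          ((((4*l+2-2*m).descFactorial (2*l+1) : ℕ)) : ℝ)) * Real.cos θ ^ (2*(l+1-m))) := by
  have h0 : (fun t : ℝ => (t^2-1)^(2*l+1))
      = fun t => Polynomial.eval t ((X^2-1 : ℝ[X])^(2*l+1)) := by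
    funext t; simp
  rw [legendreP, h0, iterDeriv_eval, poly_expand]
  simp only [eval_finset_sum, eval_mul, eval_C, eval_pow, eval_X]
  rw [Finset.mul_sum, Finset.sum_mul]
  refine sum_congr rfl fun m hm => ?_
  rw [mem_range] at hm
  rw [show 2*(l+1-m) = (2*l+1-2*m)+1 by omega, pow_succ]
  ring

lemma intA (l : ℕ) :
    (∫ θ in (0:ℝ)..π, legendreP (2*l+1) (Real.cos θ) * Real.cos θ)
      = ∑ m ∈ range (l+1),
          (1/((2:ℝ)^(2*l+1) * (((2*l+1).factorial : ℝ))) * ((-1:ℝ)^m * (((2*l+1).choose m : ℕ) : ℝ) *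
            ((((4*l+2-2*m).descFactorial (2*l+1) : ℕ)) : ℝ))) *
          (π * (((2*(l+1-m)).factorial : ℝ)) / (4^(l+1-m) * (((l+1-m).factorial : ℝ))^2)) := by
  simp only [legendre_sum]
  rw [intervalIntegral.integral_finset_sum (fun m _ => by
    apply Continuous.intervalIntegrable; fun_prop)]
  refine sum_congr rfl fun m hm => ?_
  rw [intervalIntegral.integral_const_mul, cos_pow_int]

lemma bridge (l m : ℕ) (h : m ≤ l) :
    (1/((2:ℝ)^(2*l+1) * (((2*l+1).factorial : ℝ))) * ((-1:ℝ)^m * (((2*l+1).choose m : ℕ) : ℝ) *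
      ((((4*l+2-2*m).descFactorial (2*l+1) : ℕ)) : ℝ))) *
      (π * (((2*(l+1-m)).factorial : ℝ)) / (4^(l+1-m) * (((l+1-m).factorial : ℝ))^2))
    = π * (TT l m / 4^(2*l+1)) := by
  have fne : ∀ k : ℕ, (k.factorial : ℝ) ≠ 0 := fun k => Nat.cast_ne_zero.2 (Nat.factorial_ne_zero k)
  obtain ⟨a, rfl⟩ : ∃ a, l = m + a := ⟨l - m, by omega⟩
  have hD : ((2*a+1).factorial) * ((2*m+4*a+2).descFactorial (2*(m+a)+1))
      = (2*m+4*a+2).factorial := by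
    have := Nat.factorial_mul_descFactorial (n := 2*m+4*a+2) (k := 2*(m+a)+1) (by omega)
    rwa [show 2*m+4*a+2 - (2*(m+a)+1) = 2*a+1 by omega] at this
  simp only [TT, show 4*(m+a)+2-2*m = 2*m+4*a+2 by omega,
    show 2*(m+a)+1-m = m+2*a+1 by omega,
    show m+a-m = a by omega, show m+a+1-m = a+1 by omega,
    show 2*(a+1) = 2*a+2 by omega]
  rw [Nat.cast_choose ℝ (show m ≤ 2*(m+a)+1 by omega),
    show 2*(m+a)+1-m = m+2*a+1 by omega]
  have hDR : (((2*m+4*a+2).descFactorial (2*(m+a)+1) : ℕ) : ℝ)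
      = ((2*m+4*a+2).factorial : ℝ) / ((2*a+1).factorial : ℝ) := by
    rw [eq_div_iff (fne _), mul_comm]
    exact_mod_cast congrArg (Nat.cast : ℕ → ℝ) hD
  rw [hDR]
  have e1 : ((2*a+2).factorial : ℝ) = (2*a+2)*((2*a+1).factorial) := by
    rw [show 2*a+2 = (2*a+1)+1 by omega, fs]; push_cast; ring
  have e2 : ((a+1).factorial : ℝ) = (a+1)*(a.factorial) := by
    rw [fs]
    all_goals (push_cast; ring)
  rw [e1, e2]
  have p1 : (2:ℝ)^(2*(m+a)+1) = 4^(m+a) * 2 := by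
    rw [pow_succ, pow_mul]; norm_num
  have p2 : ((-4:ℝ))^m = (-1)^m * 4^m := by
    rw [show (-4:ℝ) = (-1) * 4 by norm_num, mul_pow]
  rw [p1, p2]
  have h1 : ((2*m+4*a+2).factorial : ℝ) ≠ 0 := fne _
  have h2 : ((2*a+1).factorial : ℝ) ≠ 0 := fne _
  have h3 : ((m+2*a+1).factorial : ℝ) ≠ 0 := fne _
  have h4 : (m.factorial : ℝ) ≠ 0 := fne _
  have h5 : (a.factorial : ℝ) ≠ 0 := fne _
  have h6 : ((2*(m+a)+1).factorial : ℝ) ≠ 0 := fne _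
  have h7 : ((a:ℝ)+1) ≠ 0 := by positivity
  have h8 : (4:ℝ)^(m+a) ≠ 0 := by positivity
  have h9 : (4:ℝ)^m ≠ 0 := by positivity
  have h10 : (4:ℝ)^(a+1) ≠ 0 := by positivity
  have h11 : (4:ℝ)^(2*(m+a)+1) ≠ 0 := by positivity
  push_cast
  field_simp
  ring

lemma target_eq (l m : ℕ) (h : m ≤ l) :
    (-1 : ℝ) ^ m * ((4 * l + 2 - 2 * m).factorial : ℝ) /
          ((2 : ℝ) ^ (2 * (2 * l + 1 - m)) * (m.factorial : ℝ) *
            (((2 * l + 1 - m).factorial : ℝ)) * (((l - m).factorial : ℝ)) *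
            (((l + 1 - m).factorial : ℝ)))
      = TT l m / 4^(2*l+1) := by
  have fne : ∀ k : ℕ, (k.factorial : ℝ) ≠ 0 := fun k => Nat.cast_ne_zero.2 (Nat.factorial_ne_zero k)
  obtain ⟨a, rfl⟩ : ∃ a, l = m + a := ⟨l - m, by omega⟩
  simp only [TT, show 4*(m+a)+2-2*m = 2*m+4*a+2 by omega,
    show 2*(m+a)+1-m = m+2*a+1 by omega,
    show m+a-m = a by omega, show m+a+1-m = a+1 by omega,
    show 2*(m+2*a+1) = 2*(m+2*a+1) from rfl]
  have p0 : (2:ℝ)^(2*(m+2*a+1)) = 4^(m+2*a+1) := by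
    rw [pow_mul]; norm_num
  have p1 : (4:ℝ)^(2*(m+a)+1) = 4^m * 4^(m+2*a+1) := by
    rw [← pow_add]; congr 1; omega
  have p2 : ((-4:ℝ))^m = (-1)^m * 4^m := by
    rw [show (-4:ℝ) = (-1) * 4 by norm_num, mul_pow]
  rw [p0, p1, p2]
  have h1 : ((2*m+4*a+2).factorial : ℝ) ≠ 0 := fne _
  have h3 : ((m+2*a+1).factorial : ℝ) ≠ 0 := fne _
  have h4 : (m.factorial : ℝ) ≠ 0 := fne _
  have h5 : (a.factorial : ℝ) ≠ 0 := fne _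
  have h6 : ((a+1).factorial : ℝ) ≠ 0 := fne _
  have h8 : (4:ℝ)^(m+2*a+1) ≠ 0 := by positivity
  have h9 : (4:ℝ)^m ≠ 0 := by positivity
  field_simp

/-- For every `l ≥ 0`, `∫₀^π P_{2l+1}(cos θ) cos θ dθ` equals the explicit finite sum
`π Σ_{m=0}^{l} (−1)^m (4l+2−2m)! / (2^{2(2l+1−m)} m! (2l+1−m)! (l−m)! (l+1−m)!)`;
in particular it is a nonzero rational multiple of `π`. -/
theorem integral_legendre_odd_cos (l : ℕ) :
    (∫ θ in (0 : ℝ)..π, legendreP (2 * l + 1) (Real.cos θ) * Real.cos θ) =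
      π * ∑ m ∈ Finset.range (l + 1),
        (-1 : ℝ) ^ m * ((4 * l + 2 - 2 * m).factorial : ℝ) /
          ((2 : ℝ) ^ (2 * (2 * l + 1 - m)) * (m.factorial : ℝ) *
            (((2 * l + 1 - m).factorial : ℝ)) * (((l - m).factorial : ℝ)) *
            (((l + 1 - m).factorial : ℝ))) ∧
    ∃ q : ℚ, q ≠ 0 ∧
      (∫ θ in (0 : ℝ)..π, legendreP (2 * l + 1) (Real.cos θ) * Real.cos θ) = (q : ℝ) * π := by
  have hS : ∑ m ∈ Finset.range (l + 1),
        (-1 : ℝ) ^ m * ((4 * l + 2 - 2 * m).factorial : ℝ) /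
          ((2 : ℝ) ^ (2 * (2 * l + 1 - m)) * (m.factorial : ℝ) *
            (((2 * l + 1 - m).factorial : ℝ)) * (((l - m).factorial : ℝ)) *
            (((l + 1 - m).factorial : ℝ)))
      = ((Nat.centralBinom l : ℝ) * (Nat.centralBinom (l+1))) / 4^(2*l+1) := by
    rw [Finset.sum_congr rfl (fun m hm => target_eq l m (by
      rw [mem_range] at hm; omega)), ← Finset.sum_div, sumTT]
  have hI : (∫ θ in (0 : ℝ)..π, legendreP (2 * l + 1) (Real.cos θ) * Real.cos θ) =
      π * ∑ m ∈ Finset.range (l + 1),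
        (-1 : ℝ) ^ m * ((4 * l + 2 - 2 * m).factorial : ℝ) /
          ((2 : ℝ) ^ (2 * (2 * l + 1 - m)) * (m.factorial : ℝ) *
            (((2 * l + 1 - m).factorial : ℝ)) * (((l - m).factorial : ℝ)) *
            (((l + 1 - m).factorial : ℝ))) := by
    rw [intA]
    trans (∑ m ∈ Finset.range (l+1), π * (TT l m / 4^(2*l+1)))
    · exact Finset.sum_congr rfl fun m hm => bridge l m (by rw [mem_range] at hm; omega)
    · rw [← Finset.mul_sum, hS, ← Finset.sum_div, sumTT]
  refine ⟨hI, ⟨((Nat.centralBinom l : ℚ) * (Nat.centralBinom (l+1))) / 4^(2*l+1), ?_, ?_⟩⟩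
  · have c1 : (0:ℚ) < Nat.centralBinom l := by exact_mod_cast Nat.centralBinom_pos l
    have c2 : (0:ℚ) < Nat.centralBinom (l+1) := by exact_mod_cast Nat.centralBinom_pos (l+1)
    positivity
  · rw [hI, hS]
    push_cast
    ring

end
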